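/- On the interval J = [γ'/λ₂, ∞), the function φ(γ) = -(c̄₂ + c̄₁/(γλ)) + sqrt((c̄₂ + c̄₁/(γλ))² + 2c̄₂(λ₂γ - γ')/(λ²γ²)) is unimodal: there exists γ* in the interior of J such that φ is monotonically increasing on [γ'/λ₂, γ*] and monotonically decreasing on [γ*, ∞). -/

import Mathlib

/-- A convex quadratic which is nonpositive at two points is nonpositive in between. -/
lemma quad_convex_aux (A b c y1 y2 y3 : ℝ) (hA : 0 ≤ A) (h12 : y1 ≤ y2) (h23 : y2 ≤ y3)
    (h1 : A * y1 ^ 2 + b * y1 + c ≤ 0) (h3 : A * y3 ^ 2 + b * y3 + c ≤ 0) :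
    A * y2 ^ 2 + b * y2 + c ≤ 0 := by
  rcases eq_or_lt_of_le (h12.trans h23) with h | h
  · have hy : y2 = y1 := le_antisymm (h ▸ h23) h12
    rw [hy]; exact h1
  · nlinarith [mul_nonneg (sub_nonneg.2 h23) (neg_nonneg.2 h1),
      mul_nonneg (sub_nonneg.2 h12) (neg_nonneg.2 h3),
      mul_nonneg hA (mul_nonneg (mul_nonneg (sub_nonneg.2 h12) (sub_nonneg.2 h23))
        (sub_nonneg.2 (h12.trans h23)))]

lemma sq_bound_aux (B t C cb₂ : ℝ) (h1 : C ≤ 2 * cb₂ * t) (h2 : 2 * cb₂ * t ≤ 2 * B * t) :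
    B ^ 2 + C ≤ (B + t) ^ 2 := by
  have e : (B + t) ^ 2 = B ^ 2 + 2 * B * t + t ^ 2 := by ring
  linarith [sq_nonneg t]

theorem stmt_9 (α c₀ c₁ c₂ l l₂ : ℝ) (hα : 0 < α) (hc₀ : 0 < c₀) (hc₁ : 0 < c₁)
    (hc₂ : 0 < c₂) (hl₂ : 0 < l₂) (hl : l₂ ≤ l)
    (γ' cb₁ cb₂ : ℝ)
    (hγ' : γ' = (c₀ + c₂) ^ 2 / (4 * α) + c₁)
    (hcb₁ : cb₁ = (2 * α * c₁ + c₀ * c₂ + c₂ ^ 2) / c₂ ^ 2)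
    (hcb₂ : cb₂ = 2 * α / c₂ ^ 2)
    (φ : ℝ → ℝ)
    (hφ : ∀ γ : ℝ, φ γ = -(cb₂ + cb₁ / (γ * l)) +
      Real.sqrt ((cb₂ + cb₁ / (γ * l)) ^ 2 + 2 * cb₂ * (l₂ * γ - γ') / (l ^ 2 * γ ^ 2))) :
    ∃ γStar : ℝ, γ' / l₂ < γStar ∧
      MonotoneOn φ (Set.Icc (γ' / l₂) γStar) ∧
      AntitoneOn φ (Set.Ici γStar) := by
  have hl0 : 0 < l := lt_of_lt_of_le hl₂ hl
  have hγ'pos : 0 < γ' := by rw [hγ']; positivity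
  have hcb₁pos : 0 < cb₁ := by rw [hcb₁]; positivity
  have hcb₂pos : 0 < cb₂ := by rw [hcb₂]; positivity
  set a : ℝ := γ' / l₂ with ha
  have hapos : 0 < a := div_pos hγ'pos hl₂
  -- basic facts on the domain
  have hdom : ∀ γ : ℝ, a ≤ γ → 0 < γ ∧ 0 ≤ l₂ * γ - γ' := by
    intro γ hγ
    have hγ0 : 0 < γ := lt_of_lt_of_le hapos hγ
    refine ⟨hγ0, ?_⟩
    have := (div_le_iff₀ hl₂).mp hγ
    linarith
  -- nonnegativity of φ on the domain
  have hnn : ∀ γ : ℝ, a ≤ γ → 0 ≤ φ γ := by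
    intro γ hγ
    obtain ⟨hγ0, hC⟩ := hdom γ hγ
    have hB : 0 < cb₂ + cb₁ / (γ * l) := by positivity
    rw [hφ]
    have h1 : Real.sqrt ((cb₂ + cb₁ / (γ * l)) ^ 2) ≤
        Real.sqrt ((cb₂ + cb₁ / (γ * l)) ^ 2 + 2 * cb₂ * (l₂ * γ - γ') / (l ^ 2 * γ ^ 2)) := by
      apply Real.sqrt_le_sqrt
      have : 0 ≤ 2 * cb₂ * (l₂ * γ - γ') / (l ^ 2 * γ ^ 2) := by positivity
      linarith
    rw [Real.sqrt_sq hB.le] at h1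
    linarith
  -- level-set characterization
  have hlev : ∀ γ : ℝ, a ≤ γ → ∀ x : ℝ, 0 < x →
      (x ≤ φ γ ↔ (l ^ 2 * x ^ 2 + 2 * x * cb₂ * l ^ 2) * γ ^ 2 +
        (2 * x * cb₁ * l - 2 * cb₂ * l₂) * γ + 2 * cb₂ * γ' ≤ 0) := by
    intro γ hγ x hx
    obtain ⟨hγ0, hC⟩ := hdom γ hγ
    have hB : 0 < cb₂ + cb₁ / (γ * l) := by positivity
    have hS : 0 ≤ (cb₂ + cb₁ / (γ * l)) ^ 2 + 2 * cb₂ * (l₂ * γ - γ') / (l ^ 2 * γ ^ 2) := by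
      positivity
    rw [hφ, le_neg_add_iff_add_le,
      show cb₂ + cb₁ / (γ * l) + x = x + (cb₂ + cb₁ / (γ * l)) by ring,
      Real.le_sqrt (by positivity) hS]
    have key : (x + (cb₂ + cb₁ / (γ * l))) ^ 2 -
        ((cb₂ + cb₁ / (γ * l)) ^ 2 + 2 * cb₂ * (l₂ * γ - γ') / (l ^ 2 * γ ^ 2)) =
        ((l ^ 2 * x ^ 2 + 2 * x * cb₂ * l ^ 2) * γ ^ 2 +
          (2 * x * cb₁ * l - 2 * cb₂ * l₂) * γ + 2 * cb₂ * γ') / (l ^ 2 * γ ^ 2) := by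
      field_simp
      ring
    have hd : (0:ℝ) < l ^ 2 * γ ^ 2 := by positivity
    constructor
    · intro h
      have h2 : (x + (cb₂ + cb₁ / (γ * l))) ^ 2 -
          ((cb₂ + cb₁ / (γ * l)) ^ 2 + 2 * cb₂ * (l₂ * γ - γ') / (l ^ 2 * γ ^ 2)) ≤ 0 := by
        linarith
      rw [key] at h2
      exact (div_nonpos_iff.mp h2).elim (fun h' => absurd h'.2 (not_le.mpr hd))
        (fun h' => h'.1)
    · intro h
      have h2 : ((l ^ 2 * x ^ 2 + 2 * x * cb₂ * l ^ 2) * γ ^ 2 +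
          (2 * x * cb₁ * l - 2 * cb₂ * l₂) * γ + 2 * cb₂ * γ') / (l ^ 2 * γ ^ 2) ≤ 0 :=
        div_nonpos_iff.mpr (Or.inr ⟨h, hd.le⟩)
      rw [← key] at h2
      linarith
  -- quasiconcavity
  have hqc : ∀ γ₁ γ₂ γ₃ : ℝ, a ≤ γ₁ → γ₁ ≤ γ₂ → γ₂ ≤ γ₃ →
      min (φ γ₁) (φ γ₃) ≤ φ γ₂ := by
    intro γ₁ γ₂ γ₃ h1 h12 h23
    set x := min (φ γ₁) (φ γ₃) with hx
    rcases le_or_gt x 0 with hx0 | hx0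
    · exact hx0.trans (hnn γ₂ (h1.trans h12))
    · have hq1 := (hlev γ₁ h1 x hx0).mp (min_le_left _ _)
      have hq3 := (hlev γ₃ (h1.trans (h12.trans h23)) x hx0).mp (min_le_right _ _)
      refine (hlev γ₂ (h1.trans h12) x hx0).mpr ?_
      have hA : (0:ℝ) ≤ l ^ 2 * x ^ 2 + 2 * x * cb₂ * l ^ 2 := by positivity
      exact quad_convex_aux _ _ _ γ₁ γ₂ γ₃ hA h12 h23 hq1 hq3
  -- φ vanishes at a
  have hφa : φ a = 0 := by
    have h0 : l₂ * a - γ' = 0 := by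
      rw [ha]; field_simp; ring
    rw [hφ, h0]
    have hB : 0 < cb₂ + cb₁ / (a * l) := by positivity
    rw [show 2 * cb₂ * 0 / (l ^ 2 * a ^ 2) = 0 by ring, add_zero, Real.sqrt_sq hB.le]
    ring
  -- φ is positive at a + 1
  have hpos : 0 < φ (a + 1) := by
    have ha1 : (0:ℝ) < a + 1 := by linarith
    have hB : 0 < cb₂ + cb₁ / ((a + 1) * l) := by positivity
    have hCpos : 0 < 2 * cb₂ * (l₂ * (a + 1) - γ') / (l ^ 2 * (a + 1) ^ 2) := by
      have : l₂ * (a + 1) - γ' = l₂ := by rw [ha]; field_simp; ring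
      rw [this]; positivity
    rw [hφ]
    have h1 : Real.sqrt ((cb₂ + cb₁ / ((a + 1) * l)) ^ 2) <
        Real.sqrt ((cb₂ + cb₁ / ((a + 1) * l)) ^ 2 +
          2 * cb₂ * (l₂ * (a + 1) - γ') / (l ^ 2 * (a + 1) ^ 2)) := by
      apply Real.sqrt_lt_sqrt (by positivity)
      linarith
    rw [Real.sqrt_sq hB.le] at h1
    linarith
  -- decay bound
  have hdecay : ∀ γ : ℝ, a ≤ γ → φ γ ≤ l₂ / (l ^ 2 * γ) := by
    intro γ hγ
    obtain ⟨hγ0, hC⟩ := hdom γ hγ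
    set B := cb₂ + cb₁ / (γ * l) with hB
    set t := l₂ / (l ^ 2 * γ) with ht
    have hBpos : 0 < B := by rw [hB]; positivity
    have htpos : 0 < t := by rw [ht]; positivity
    have hCle : 2 * cb₂ * (l₂ * γ - γ') / (l ^ 2 * γ ^ 2) ≤ 2 * cb₂ * t := by
      have e1 : 2 * cb₂ * (l₂ * γ - γ') / (l ^ 2 * γ ^ 2) ≤
          2 * cb₂ * (l₂ * γ) / (l ^ 2 * γ ^ 2) := by
        gcongr
        linarith
      have e2 : 2 * cb₂ * (l₂ * γ) / (l ^ 2 * γ ^ 2) = 2 * cb₂ * t := by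
        rw [ht]; field_simp
      linarith
    have hcb₂B : cb₂ ≤ B := by
      rw [hB]
      have : 0 ≤ cb₁ / (γ * l) := by positivity
      linarith
    have hsq : B ^ 2 + 2 * cb₂ * (l₂ * γ - γ') / (l ^ 2 * γ ^ 2) ≤
        (B + t) ^ 2 := by
      have h2 : 2 * cb₂ * t ≤ 2 * B * t := by nlinarith
      exact sq_bound_aux B t _ cb₂ hCle h2
    have h3 : Real.sqrt (B ^ 2 +
        2 * cb₂ * (l₂ * γ - γ') / (l ^ 2 * γ ^ 2)) ≤ B + t := by
      calc Real.sqrt _ ≤ Real.sqrt ((B + t) ^ 2) := Real.sqrt_le_sqrt hsq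
        _ = B + t := Real.sqrt_sq (by linarith)
    rw [hφ, ← hB]
    linarith
  -- continuity
  have hcont : ContinuousOn φ (Set.Ici a) := by
    have hφf : φ = fun γ => -(cb₂ + cb₁ / (γ * l)) +
        Real.sqrt ((cb₂ + cb₁ / (γ * l)) ^ 2 + 2 * cb₂ * (l₂ * γ - γ') / (l ^ 2 * γ ^ 2)) :=
      funext hφ
    rw [hφf]
    have hne : ∀ γ ∈ Set.Ici a, γ * l ≠ 0 := fun γ hγ =>
      mul_ne_zero (lt_of_lt_of_le hapos hγ).ne' hl0.ne'
    have hne2 : ∀ γ ∈ Set.Ici a, l ^ 2 * γ ^ 2 ≠ 0 := fun γ hγ => by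
      have : 0 < γ := lt_of_lt_of_le hapos hγ
      positivity
    have hBc : ContinuousOn (fun γ : ℝ => cb₂ + cb₁ / (γ * l)) (Set.Ici a) :=
      continuousOn_const.add (continuousOn_const.div
        (continuousOn_id.mul continuousOn_const) hne)
    apply ContinuousOn.add hBc.neg
    apply ContinuousOn.sqrt
    refine (hBc.pow 2).add (ContinuousOn.div ?_ ?_ hne2)
    · exact continuousOn_const.mul ((continuousOn_const.mul continuousOn_id).sub
        continuousOn_const)
    · exact continuousOn_const.mul (continuousOn_id.pow 2)
  -- the bound point M
  set p := φ (a + 1) with hp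
  set M : ℝ := max (a + 1) (2 * l₂ / (l ^ 2 * p)) with hM
  have haM : a + 1 ≤ M := le_max_left _ _
  have hsmall : ∀ γ : ℝ, M ≤ γ → φ γ ≤ p / 2 := by
    intro γ hγM
    have hγa : a ≤ γ := by linarith [le_max_left (a + 1) (2 * l₂ / (l ^ 2 * p))]
    have hγ0 : 0 < γ := lt_of_lt_of_le hapos hγa
    have h1 : φ γ ≤ l₂ / (l ^ 2 * γ) := hdecay γ hγa
    have h2 : 2 * l₂ / (l ^ 2 * p) ≤ γ := le_trans (le_max_right _ _) hγM
    have h3 : 2 * l₂ ≤ γ * (l ^ 2 * p) := by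
      rw [div_le_iff₀ (by positivity)] at h2
      linarith
    have h4 : l₂ / (l ^ 2 * γ) ≤ p / 2 := by
      rw [div_le_div_iff₀ (by positivity) (by norm_num : (0:ℝ) < 2)]
      have : γ * (l ^ 2 * p) = p * (l ^ 2 * γ) := by ring
      linarith
    linarith
  -- maximum on the compact interval
  obtain ⟨γStar, hγStarMem, hγStarMax⟩ :=
    (isCompact_Icc : IsCompact (Set.Icc a M)).exists_isMaxOn
      ⟨a, le_refl a, by linarith⟩ (hcont.mono (Set.Icc_subset_Ici_self))
  have hstarp : p ≤ φ γStar := hγStarMax ⟨by linarith, haM⟩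
  have hstar_gt : a < γStar := by
    rcases lt_or_eq_of_le hγStarMem.1 with h | h
    · exact h
    · exfalso
      rw [← h] at hstarp
      rw [hφa] at hstarp
      linarith
  -- γStar is a global max on [a, ∞)
  have hglobal : ∀ γ : ℝ, a ≤ γ → φ γ ≤ φ γStar := by
    intro γ hγ
    rcases le_or_gt γ M with h | h
    · exact hγStarMax ⟨hγ, h⟩
    · have := hsmall γ h.le
      linarith
  refine ⟨γStar, hstar_gt, ?_, ?_⟩
  · intro x hx y hy hxy
    have h1 := hqc x y γStar hx.1 hxy hy.2
    have h2 := hglobal x hx.1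
    calc φ x = min (φ x) (φ γStar) := (min_eq_left h2).symm
      _ ≤ φ y := h1
  · intro x hx y hy hxy
    have h1 := hqc γStar x y hstar_gt.le hx hxy
    have h2 := hglobal y (hstar_gt.le.trans (hx.trans hxy))
    calc φ y = min (φ γStar) (φ y) := (min_eq_right h2).symm
      _ ≤ φ x := h1
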